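/- The proportion of permutations of {1,...,k} that are decomposable (σ({1,...,j}) = {1,...,j} for some 1 ≤ j ≤ k-1) tends to 0 as k → ∞. -/

import Mathlib

open Nat Filter

theorem myChooseMono {n r s : ℕ} (hrs : r ≤ s) (hs : s ≤ n / 2) : n.choose r ≤ n.choose s := by
  induction s with
  | zero => simp_all
  | succ t ih =>
    rcases Nat.lt_or_ge r (t + 1) with h | h
    · exact (ih (Nat.le_of_lt_succ h) (le_trans (Nat.le_succ t) hs)).trans
        (Nat.choose_le_succ_of_lt_half_left (lt_of_lt_of_le (Nat.lt_succ_self t) hs))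
    · have : r = t + 1 := le_antisymm hrs h
      subst this; rfl

theorem chooseTwoLe {k j : ℕ} (h2 : 2 ≤ j) (hk : j + 2 ≤ k) : k.choose 2 ≤ k.choose j := by
  rcases le_or_gt j (k / 2) with h | h
  · exact myChooseMono h2 h
  · rw [← Nat.choose_symm (by omega : j ≤ k)]
    exact myChooseMono (by omega) (by omega)

theorem factBound' {k j : ℕ} (h2 : 2 ≤ j) (hk : j + 2 ≤ k) : j ! * (k - j)! ≤ 2 * (k - 2)! := by
  have hjk : j ≤ k := by omega
  have e1 : k.choose j * (j ! * (k - j)!) = k ! := by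
    rw [← Nat.mul_assoc]; exact Nat.choose_mul_factorial_mul_factorial hjk
  have e2 : k.choose 2 * (2 * (k - 2)!) = k ! := by
    have := Nat.choose_mul_factorial_mul_factorial (by omega : 2 ≤ k)
    rw [← Nat.mul_assoc]; simpa [Nat.factorial] using this
  have hpos : 0 < k.choose j := Nat.choose_pos hjk
  have : k.choose j * (j ! * (k - j)!) ≤ k.choose j * (2 * (k - 2)!) := by
    rw [e1, ← e2]
    exact Nat.mul_le_mul_right _ (chooseTwoLe h2 hk)
  exact Nat.le_of_mul_le_mul_left this hpos

theorem cardBound' {k j : ℕ} (hjk : j ≤ k) :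
    Fintype.card {σ : Equiv.Perm (Fin k) // ∀ i : Fin k, (i : ℕ) < j → ((σ i : ℕ) < j)}
      ≤ j ! * (k - j)! := by
  classical
  have hiff : ∀ (σ : Equiv.Perm (Fin k)), (∀ i : Fin k, (i : ℕ) < j → ((σ i : ℕ) < j)) →
      ∀ x : Fin k, (x : ℕ) < j ↔ ((σ x : ℕ) < j) := by
    intro σ hσ x
    constructor
    · exact hσ x
    · intro hx
      let g : {i : Fin k // (i : ℕ) < j} → {i : Fin k // (i : ℕ) < j} :=
        fun i => ⟨σ i, hσ i i.2⟩
      have hg : Function.Injective g := by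
        intro a b hab
        have : (σ a : Fin k) = σ b := congrArg Subtype.val hab
        exact Subtype.ext (σ.injective this)
      obtain ⟨y, hy⟩ := (Finite.injective_iff_surjective.mp hg) ⟨σ x, hx⟩
      have : (σ y : Fin k) = σ x := congrArg Subtype.val hy
      have : (y : Fin k) = x := σ.injective this
      rw [← this]; exact y.2
  let F : {σ : Equiv.Perm (Fin k) // ∀ i : Fin k, (i : ℕ) < j → ((σ i : ℕ) < j)} →
      Equiv.Perm {i : Fin k // (i : ℕ) < j} × Equiv.Perm {i : Fin k // ¬ ((i : ℕ) < j)} :=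
    fun σ => (σ.1.subtypePerm (fun x => (hiff σ.1 σ.2 x).symm),
      σ.1.subtypePerm (fun x => not_congr (hiff σ.1 σ.2 x).symm))
  have hF : Function.Injective F := by
    intro σ τ h
    obtain ⟨h1, h2⟩ := Prod.mk.injEq .. ▸ h
    apply Subtype.ext
    apply Equiv.ext
    intro x
    by_cases hx : (x : ℕ) < j
    · have := congrArg (fun e => ((e ⟨x, hx⟩ : {i : Fin k // (i : ℕ) < j}) : Fin k)) h1
      simpa using this
    · have := congrArg (fun e => ((e ⟨x, hx⟩ : {i : Fin k // ¬ ((i : ℕ) < j)}) : Fin k)) h2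
      simpa using this
  calc Fintype.card {σ : Equiv.Perm (Fin k) // ∀ i : Fin k, (i : ℕ) < j → ((σ i : ℕ) < j)}
      ≤ Fintype.card (Equiv.Perm {i : Fin k // (i : ℕ) < j} ×
          Equiv.Perm {i : Fin k // ¬ ((i : ℕ) < j)}) := Fintype.card_le_of_injective F hF
    _ = j ! * (k - j)! := by
        have c1 : Fintype.card {i : Fin k // (i : ℕ) < j} = j := by
          have e : {i : Fin k // (i : ℕ) < j} ≃ Fin j :=
            ⟨fun i => ⟨i.1.1, i.2⟩, fun a => ⟨⟨a.1, lt_of_lt_of_le a.2 hjk⟩, a.2⟩,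
              fun i => rfl, fun a => rfl⟩
          rw [Fintype.card_congr e, Fintype.card_fin]
        have c2 : Fintype.card {i : Fin k // ¬ ((i : ℕ) < j)} = k - j := by
          rw [Fintype.card_subtype_compl, c1, Fintype.card_fin]
        rw [Fintype.card_prod, Fintype.card_perm, Fintype.card_perm, c1, c2]

/-- A permutation `σ` of `{1,…,k}` is decomposable if for some `1 ≤ j ≤ k-1`,
`σ` maps `{1,…,j}` onto `{1,…,j}`. -/
def Decomposable {k : ℕ} (σ : Equiv.Perm (Fin k)) : Prop :=
  ∃ j : ℕ, 1 ≤ j ∧ j + 1 ≤ k ∧ ∀ i : Fin k, (i : ℕ) < j → ((σ i : ℕ) < j)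

theorem mainNat {k : ℕ} (hk : 4 ≤ k) :
    k * Nat.card {σ : Equiv.Perm (Fin k) // Decomposable σ} ≤ 6 * k ! := by
  classical
  have hNle : Nat.card {σ : Equiv.Perm (Fin k) // Decomposable σ} ≤
      ∑ j ∈ Finset.Ico 1 k, j ! * (k - j)! := by
    rw [Nat.card_eq_fintype_card, Fintype.card_subtype]
    calc (Finset.univ.filter Decomposable).card
        ≤ ((Finset.Ico 1 k).biUnion (fun j => Finset.univ.filter
            (fun σ : Equiv.Perm (Fin k) => ∀ i : Fin k, (i : ℕ) < j → ((σ i : ℕ) < j)))).card := by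
          apply Finset.card_le_card
          intro σ hσ
          simp only [Finset.mem_filter, Finset.mem_univ, true_and] at hσ
          obtain ⟨j, hj1, hjk, hA⟩ := hσ
          simp only [Finset.mem_biUnion, Finset.mem_Ico, Finset.mem_filter, Finset.mem_univ,
            true_and]
          exact ⟨j, ⟨hj1, by omega⟩, hA⟩
      _ ≤ ∑ j ∈ Finset.Ico 1 k, (Finset.univ.filter
            (fun σ : Equiv.Perm (Fin k) => ∀ i : Fin k, (i : ℕ) < j → ((σ i : ℕ) < j))).card :=
          Finset.card_biUnion_le
      _ ≤ ∑ j ∈ Finset.Ico 1 k, j ! * (k - j)! := by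
          apply Finset.sum_le_sum
          intro j hj
          rw [← Fintype.card_subtype]
          exact cardBound' (by simp [Finset.mem_Ico] at hj; omega)
  have hsum : ∑ j ∈ Finset.Ico 1 k, j ! * (k - j)! ≤ 2 * (k - 1)! + 2 * (k * (k - 2)!) := by
    have e1 : ∑ j ∈ Finset.Ico 1 k, j ! * (k - j)! =
        1 ! * (k - 1)! + ∑ j ∈ Finset.Ico 2 k, j ! * (k - j)! :=
      Finset.sum_eq_sum_Ico_succ_bot (by omega) _
    have e2 : ∑ j ∈ Finset.Ico 2 k, j ! * (k - j)! =
        (∑ j ∈ Finset.Ico 2 (k - 1), j ! * (k - j)!) + (k - 1)! * (k - (k - 1))! := by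
      rw [← Finset.sum_Ico_succ_top (by omega : 2 ≤ k - 1)]
      congr 1
    have e3 : ∑ j ∈ Finset.Ico 2 (k - 1), j ! * (k - j)! ≤ (k - 3) * (2 * (k - 2)!) := by
      have h := Finset.sum_le_card_nsmul (Finset.Ico 2 (k - 1))
        (fun j => j ! * (k - j)!) (2 * (k - 2)!)
        (fun j hj => by
          simp only [Finset.mem_Ico] at hj
          exact factBound' hj.1 (by omega))
      simpa [Nat.card_Ico, smul_eq_mul, (by omega : k - 1 - 2 = k - 3)] using h
    have h4 : (k - 3) * (2 * (k - 2)!) ≤ 2 * (k * (k - 2)!) := by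
      calc (k - 3) * (2 * (k - 2)!) = 2 * ((k - 3) * (k - 2)!) := by ring
        _ ≤ 2 * (k * (k - 2)!) :=
            Nat.mul_le_mul_left _ (Nat.mul_le_mul_right _ (by omega))
    have h5 := e3.trans h4
    rw [e1, e2, (by omega : k - (k - 1) = 1)]
    simp only [Nat.factorial_one, Nat.one_mul, Nat.mul_one]
    omega
  set N := Nat.card {σ : Equiv.Perm (Fin k) // Decomposable σ} with hN
  have hNs := hNle.trans hsum
  have f1 : k * (k - 1)! = k ! := Nat.mul_factorial_pred (by omega)
  have f2 : (k - 1) * (k - 2)! = (k - 1)! := by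
    have h := Nat.mul_factorial_pred (n := k - 1) (by omega)
    rwa [(by omega : k - 1 - 1 = k - 2)] at h
  have h6 : k * (k - 2)! ≤ 2 * (k - 1)! := by
    rw [← f2]
    calc k * (k - 2)! ≤ (2 * (k - 1)) * (k - 2)! := Nat.mul_le_mul_right _ (by omega)
      _ = 2 * ((k - 1) * (k - 2)!) := by ring
  calc k * N ≤ k * (2 * (k - 1)! + 2 * (k * (k - 2)!)) := Nat.mul_le_mul_left _ hNs
    _ ≤ k * (2 * (k - 1)! + 2 * (2 * (k - 1)!)) :=
        Nat.mul_le_mul_left _ (Nat.add_le_add_left (Nat.mul_le_mul_left 2 h6) _)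
    _ = 6 * (k * (k - 1)!) := by ring
    _ = 6 * k ! := by rw [f1]

/-- The proportion of permutations of `{1,…,k}` that are decomposable tends to `0`
as `k → ∞`. -/
theorem stmt6 :
    Tendsto
      (fun k : ℕ =>
        (Nat.card {σ : Equiv.Perm (Fin k) // Decomposable σ} : ℝ) / ((k ! : ℕ) : ℝ))
      atTop (nhds 0) := by
  have hlim : Tendsto (fun k : ℕ => (6 : ℝ) / k) atTop (nhds 0) :=
    tendsto_const_div_atTop_nhds_zero_nat 6
  apply tendsto_of_tendsto_of_tendsto_of_le_of_le' tendsto_const_nhds hlim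
  · filter_upwards with k
    positivity
  · filter_upwards [eventually_ge_atTop 4] with k hk
    have hk0 : (0 : ℝ) < (k : ℝ) := by exact_mod_cast (by omega : 0 < k)
    have hf : (0 : ℝ) < ((k ! : ℕ) : ℝ) := by exact_mod_cast k.factorial_pos
    rw [div_le_div_iff₀ hf hk0]
    have h := mainNat hk
    rw [mul_comm]
    exact_mod_cast h
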